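/- Let Y be a real Banach space, O ⊆ Y an open neighbourhood of a point φ ∈ Y, and W : O → Y a twice continuously (Fréchet) differentiable map with W(φ) = φ. If the Fréchet derivative W'(φ), a continuous linear operator on Y, has spectral radius r(W'(φ)) = lim_{n→∞} ‖(W'(φ))ⁿ‖^{1/n} > 1 (in particular if some spectral value μ of W'(φ) satisfies |μ| > 1), then φ is an unstable fixed point of W. -/

import Mathlib

open Filter Finset

set_option maxHeartbeats 1000000

/-- Telescoping identity: `y n = Aⁿ y₀ + ∑_{k<n} A^{n-1-k} (y_{k+1} - A y_k)`. -/
private lemma tele_aux {Y : Type*} [NormedAddCommGroup Y] [NormedSpace ℝ Y]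
    (A : Y →L[ℝ] Y) (y : ℕ → Y) :
    ∀ n : ℕ, y n = (A ^ n) (y 0) +
      ∑ k ∈ Finset.range n, (A ^ (n - 1 - k)) (y (k + 1) - A (y k)) := by
  intro n
  induction n with
  | zero => simp
  | succ n ih =>
    rw [Finset.sum_range_succ]
    have h1 : ∀ k ∈ Finset.range n, (A ^ (n + 1 - 1 - k)) (y (k + 1) - A (y k))
        = A ((A ^ (n - 1 - k)) (y (k + 1) - A (y k))) := by
      intro k hk
      rw [Finset.mem_range] at hk
      have h2 : n + 1 - 1 - k = (n - 1 - k) + 1 := by omega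
      rw [h2, pow_succ']
      rfl
    have hid : n + 1 - 1 - n = 0 := by omega
    rw [Finset.sum_congr rfl h1, ← map_sum, hid, pow_zero]
    have ihs : ∑ k ∈ Finset.range n, (A ^ (n - 1 - k)) (y (k + 1) - A (y k))
        = y n - (A ^ n) (y 0) := by rw [ih]; abel
    rw [ihs, map_sub]
    have hp : A ((A ^ n) (y 0)) = (A ^ (n + 1)) (y 0) := by
      rw [pow_succ']; rfl
    rw [hp]
    simp only [ContinuousLinearMap.one_apply]
    abel

/-- If W is C² on an open neighbourhood O of a fixed point φ (W(φ) = φ) in a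
real Banach space and the Fréchet derivative W'(φ) has spectral radius
r(W'(φ)) = lim ‖(W'(φ))ⁿ‖^{1/n} > 1, then φ is an unstable fixed point of W. -/
theorem stmt_14 {Y : Type*} [NormedAddCommGroup Y] [NormedSpace ℝ Y] [CompleteSpace Y]
    (O : Set Y) (hO : IsOpen O) (φ : Y) (hφ : φ ∈ O)
    (W : Y → Y) (hW : ContDiffOn ℝ 2 W O) (hWφ : W φ = φ)
    (r : ℝ)
    (hr : Filter.Tendsto (fun n : ℕ => ‖(fderiv ℝ W φ) ^ n‖ ^ (1 / (n : ℝ)))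
      Filter.atTop (nhds r))
    (hr1 : 1 < r) :
    ∃ ε > 0, ∀ δ > 0, ∃ w ∈ O, ‖w - φ‖ < δ ∧
      ∃ n : ℕ, (∀ m < n, W^[m] w ∈ O) ∧ ε ≤ ‖W^[n] w - φ‖ := by
  classical
  set A := fderiv ℝ W φ with hA
  have hr0 : (0:ℝ) < r := lt_trans zero_lt_one hr1
  -- an auxiliary rpow identity
  have hrpow : ∀ (x : ℝ), 0 ≤ x → ∀ n : ℕ, 1 ≤ n → (x ^ (1 / (n:ℝ))) ^ n = x := by
    intro x hx n hn
    have hn' : (n:ℝ) ≠ 0 := Nat.cast_ne_zero.2 (by omega)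
    rw [← Real.rpow_natCast (x ^ (1 / (n:ℝ))) n, ← Real.rpow_mul hx,
      one_div_mul_cancel hn', Real.rpow_one]
  -- Step 1: r^n ≤ ‖A^n‖ for n ≥ 1
  have hpow : ∀ n : ℕ, 1 ≤ n → r ^ n ≤ ‖A ^ n‖ := by
    intro n hn
    have hmul : Filter.Tendsto (fun k : ℕ => n * k) atTop atTop := by
      apply Filter.tendsto_atTop_atTop_of_monotone (fun a b hab => Nat.mul_le_mul_left n hab)
      intro b; exact ⟨b, Nat.le_mul_of_pos_left b (by omega)⟩
    have hsub : Filter.Tendsto (fun k : ℕ => ‖A ^ (n * k)‖ ^ (1 / ((n * k : ℕ) : ℝ)))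
        atTop (nhds r) := hr.comp hmul
    have hle : r ≤ ‖A ^ n‖ ^ (1 / (n:ℝ)) := by
      refine le_of_tendsto hsub ?_
      filter_upwards [Filter.eventually_ge_atTop 1] with k hk
      have h1 : ‖A ^ (n * k)‖ ≤ ‖A ^ n‖ ^ k := by
        rw [pow_mul]; exact norm_pow_le' _ (by omega)
      calc ‖A ^ (n * k)‖ ^ (1 / ((n * k : ℕ) : ℝ))
          ≤ (‖A ^ n‖ ^ k) ^ (1 / ((n * k : ℕ) : ℝ)) :=
            Real.rpow_le_rpow (norm_nonneg _) h1 (by positivity)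
        _ = ‖A ^ n‖ ^ (1 / (n:ℝ)) := by
            rw [← Real.rpow_natCast ‖A ^ n‖ k, ← Real.rpow_mul (norm_nonneg _)]
            congr 1
            have hn0 : (n:ℝ) ≠ 0 := Nat.cast_ne_zero.2 (by omega)
            have hk0 : (k:ℝ) ≠ 0 := Nat.cast_ne_zero.2 (by omega)
            push_cast
            field_simp
    calc r ^ n ≤ (‖A ^ n‖ ^ (1 / (n:ℝ))) ^ n := pow_le_pow_left₀ hr0.le hle n
      _ = ‖A ^ n‖ := hrpow _ (norm_nonneg _) n hn
  -- Step 2: choose ρ ∈ (r, r²) and M with ‖A^n‖ ≤ M ρ^n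
  obtain ⟨ρ, hρdef⟩ : ∃ p : ℝ, p = (r + r ^ 2) / 2 := ⟨_, rfl⟩
  have hrρ : r < ρ := by rw [hρdef]; nlinarith
  have hρr2 : ρ < r ^ 2 := by rw [hρdef]; nlinarith
  have hρ1 : (1:ℝ) < ρ := lt_trans hr1 hrρ
  have hρ0 : (0:ℝ) < ρ := lt_trans zero_lt_one hρ1
  have hMex : ∃ M : ℝ, 1 ≤ M ∧ ∀ n : ℕ, ‖A ^ n‖ ≤ M * ρ ^ n := by
    have hev : ∀ᶠ n : ℕ in atTop, ‖A ^ n‖ ^ (1 / (n:ℝ)) ≤ ρ :=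
      hr.eventually (eventually_le_nhds hrρ)
    obtain ⟨n0, hn0⟩ := Filter.eventually_atTop.1 hev
    refine ⟨1 + ∑ m ∈ Finset.range (n0 + 1), ‖A ^ m‖, ?_, ?_⟩
    · have : (0:ℝ) ≤ ∑ m ∈ Finset.range (n0 + 1), ‖A ^ m‖ :=
        Finset.sum_nonneg fun m _ => norm_nonneg _
      linarith
    · intro n
      by_cases hcase : n ≤ n0
      · have h1 : ‖A ^ n‖ ≤ ∑ m ∈ Finset.range (n0 + 1), ‖A ^ m‖ :=
          Finset.single_le_sum (fun m _ => norm_nonneg (A ^ m))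
            (Finset.mem_range.2 (by omega))
        have h2 : (1:ℝ) ≤ ρ ^ n := one_le_pow₀ hρ1.le
        have h3 : (0:ℝ) ≤ ∑ m ∈ Finset.range (n0 + 1), ‖A ^ m‖ :=
          Finset.sum_nonneg fun m _ => norm_nonneg _
        have h4 : (1 + ∑ m ∈ Finset.range (n0 + 1), ‖A ^ m‖) * 1 ≤
            (1 + ∑ m ∈ Finset.range (n0 + 1), ‖A ^ m‖) * ρ ^ n :=
          mul_le_mul_of_nonneg_left h2 (by linarith)
        linarith
      · have hn1 : 1 ≤ n := by omega
        have h1 : ‖A ^ n‖ ^ (1 / (n:ℝ)) ≤ ρ := hn0 n (by omega)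
        have h2 : (‖A ^ n‖ ^ (1 / (n:ℝ))) ^ n ≤ ρ ^ n :=
          pow_le_pow_left₀ (Real.rpow_nonneg (norm_nonneg _) _) h1 n
        rw [hrpow _ (norm_nonneg _) n hn1] at h2
        have h3 : (0:ℝ) < ρ ^ n := pow_pos hρ0 n
        have h4 : (0:ℝ) ≤ ∑ m ∈ Finset.range (n0 + 1), ‖A ^ m‖ :=
          Finset.sum_nonneg fun m _ => norm_nonneg _
        nlinarith [mul_nonneg h4 h3.le]
  obtain ⟨M, hM1, hMb⟩ := hMex
  have hM0 : (0:ℝ) < M := lt_of_lt_of_le zero_lt_one hM1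
  -- Step 3: choose s with √ρ < s < r (so 1 < s, ρ < s²)
  obtain ⟨s, hsdef⟩ : ∃ q : ℝ, q = (Real.sqrt ρ + r) / 2 := ⟨_, rfl⟩
  have hsqρr : Real.sqrt ρ < r := by
    have h := Real.sqrt_lt_sqrt hρ0.le hρr2
    rwa [Real.sqrt_sq hr0.le] at h
  have h1sq : (1:ℝ) < Real.sqrt ρ := by
    have h := Real.sqrt_lt_sqrt zero_le_one hρ1
    rwa [Real.sqrt_one] at h
  have h1s : (1:ℝ) < s := by rw [hsdef]; linarith
  have hs0 : (0:ℝ) < s := lt_trans zero_lt_one h1s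
  have hsr : s < r := by rw [hsdef]; linarith
  have hρs2 : ρ < s ^ 2 := by
    have h0 : Real.sqrt ρ < s := by rw [hsdef]; linarith
    have h1 : ρ = Real.sqrt ρ ^ 2 := (Real.sq_sqrt hρ0.le).symm
    nlinarith [Real.sqrt_nonneg ρ]
  -- Step 4: Banach–Steinhaus: a vector with unbounded s-normalized orbit
  have hxex : ∃ x : Y, ∀ c : ℝ, ∃ n : ℕ, c * s ^ n ≤ ‖(A ^ n) x‖ := by
    by_contra hcon
    push_neg at hcon
    have hb : ∀ x : Y, ∃ C : ℝ, ∀ n : ℕ, ‖((s ^ n)⁻¹ • A ^ n) x‖ ≤ C := by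
      intro x
      obtain ⟨c, hc⟩ := hcon x
      refine ⟨max c 0, fun n => ?_⟩
      have hsn : (0:ℝ) < s ^ n := pow_pos hs0 n
      have h1 : ‖(A ^ n) x‖ ≤ max c 0 * s ^ n :=
        le_trans (hc n).le (mul_le_mul_of_nonneg_right (le_max_left _ _) hsn.le)
      rw [ContinuousLinearMap.smul_apply, norm_smul, norm_inv, Real.norm_eq_abs,
        abs_of_pos hsn]
      calc (s ^ n)⁻¹ * ‖(A ^ n) x‖ ≤ (s ^ n)⁻¹ * (max c 0 * s ^ n) :=
            mul_le_mul_of_nonneg_left h1 (inv_nonneg.2 hsn.le)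
        _ = max c 0 := by field_simp
    obtain ⟨C', hC'⟩ := banach_steinhaus hb
    have hrs1 : (1:ℝ) < r / s := (one_lt_div hs0).2 hsr
    obtain ⟨n, hn⟩ := pow_unbounded_of_one_lt (max C' 1) hrs1
    have hn1 : 1 ≤ n := by
      rcases Nat.eq_zero_or_pos n with h0 | h; · exfalso; rw [h0, pow_zero] at hn
                                                 exact absurd hn (not_lt.2 (le_max_right _ _))
      · omega
    have hsn : (0:ℝ) < s ^ n := pow_pos hs0 n
    have h2 : ‖(s ^ n)⁻¹ • A ^ n‖ = ‖A ^ n‖ / s ^ n := by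
      rw [norm_smul, norm_inv, Real.norm_eq_abs, abs_of_pos hsn, inv_mul_eq_div]
    have h3 : (r / s) ^ n ≤ ‖A ^ n‖ / s ^ n := by
      rw [div_pow]
      exact div_le_div_of_nonneg_right (hpow n hn1) hsn.le
    have h4 := hC' n
    rw [h2] at h4
    have h5 : (r / s) ^ n ≤ max C' 1 := le_trans h3 (le_trans h4 (le_max_left _ _))
    linarith
  obtain ⟨x, hx⟩ := hxex
  -- Step 5: Taylor estimate near φ
  have hWd : ∀ y ∈ O, DifferentiableAt ℝ W y := by
    intro y hy
    exact (hW.contDiffAt (hO.mem_nhds hy)).differentiableAt (by norm_num)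
  have hfd : ContDiffAt ℝ 1 (fderiv ℝ W) φ :=
    (hW.contDiffAt (hO.mem_nhds hφ)).fderiv_right (by norm_num)
  obtain ⟨K, t, htm, hlip⟩ := hfd.exists_lipschitzOnWith
  obtain ⟨ε₀, hε₀, hball⟩ : ∃ ε₀ > 0, Metric.closedBall φ ε₀ ⊆ t ∩ O := by
    have hmem : t ∩ O ∈ nhds φ := Filter.inter_mem htm (hO.mem_nhds hφ)
    rcases Metric.mem_nhds_iff.1 hmem with ⟨ε₁, hε₁, hb⟩
    exact ⟨ε₁ / 2, by linarith, le_trans (Metric.closedBall_subset_ball (by linarith)) hb⟩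
  obtain ⟨C, hCdef⟩ : ∃ c : ℝ, c = (K:ℝ) + 1 := ⟨_, rfl⟩
  have hC0 : (0:ℝ) < C := by rw [hCdef]; positivity
  have htay : ∀ h : Y, ‖h‖ ≤ ε₀ → ‖W (φ + h) - φ - A h‖ ≤ C * ‖h‖ ^ 2 := by
    intro h hh
    have hsub : Metric.closedBall φ ‖h‖ ⊆ t ∩ O := fun y hy =>
      hball (Metric.closedBall_subset_closedBall hh hy)
    have hderiv : ∀ y ∈ Metric.closedBall φ ‖h‖,
        HasFDerivWithinAt (fun z => W z - A z) (fderiv ℝ W y - A)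
          (Metric.closedBall φ ‖h‖) y := by
      intro y hy
      exact (((hWd y (hsub hy).2).hasFDerivAt).sub A.hasFDerivAt).hasFDerivWithinAt
    have hbound : ∀ y ∈ Metric.closedBall φ ‖h‖, ‖fderiv ℝ W y - A‖ ≤ C * ‖h‖ := by
      intro y hy
      have hyt : y ∈ t := (hsub hy).1
      have hφt : φ ∈ t := mem_of_mem_nhds htm
      have hd : dist (fderiv ℝ W y) (fderiv ℝ W φ) ≤ (K:ℝ) * dist y φ :=
        hlip.dist_le_mul y hyt φ hφt
      have hyφ : ‖y - φ‖ ≤ ‖h‖ := by rwa [Metric.mem_closedBall, dist_eq_norm] at hy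
      rw [dist_eq_norm, dist_eq_norm] at hd
      have hK : (K:ℝ) ≤ C := by rw [hCdef]; linarith
      calc ‖fderiv ℝ W y - A‖ = ‖fderiv ℝ W y - fderiv ℝ W φ‖ := by rw [hA]
        _ ≤ (K:ℝ) * ‖y - φ‖ := hd
        _ ≤ C * ‖h‖ := mul_le_mul hK hyφ (norm_nonneg _) hC0.le
    have hxmem : φ ∈ Metric.closedBall φ ‖h‖ := Metric.mem_closedBall_self (norm_nonneg h)
    have hymem : φ + h ∈ Metric.closedBall φ ‖h‖ := by
      rw [Metric.mem_closedBall, dist_eq_norm, add_sub_cancel_left]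
    have hmv := (convex_closedBall φ ‖h‖).norm_image_sub_le_of_norm_hasFDerivWithin_le
      hderiv hbound hxmem hymem
    have heq : (W (φ + h) - A (φ + h)) - (W φ - A φ) = W (φ + h) - φ - A h := by
      rw [map_add, hWφ]; abel
    rw [heq, add_sub_cancel_left] at hmv
    calc ‖W (φ + h) - φ - A h‖ ≤ C * ‖h‖ * ‖h‖ := hmv
      _ = C * ‖h‖ ^ 2 := by ring
  -- Step 6: the constants
  have hs2ρ : (0:ℝ) < s ^ 2 - ρ := by linarith
  obtain ⟨K₀, hK₀def⟩ : ∃ c : ℝ, c = min ε₀ ((s ^ 2 - ρ) / (4 * C * M)) := ⟨_, rfl⟩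
  have hK₀0 : (0:ℝ) < K₀ := by
    rw [hK₀def]
    exact lt_min hε₀ (div_pos hs2ρ (by positivity))
  have hK₀ε₀ : K₀ ≤ ε₀ := by rw [hK₀def]; exact min_le_left _ _
  have hK₀CM : 4 * C * M * K₀ ≤ s ^ 2 - ρ := by
    have h1 : K₀ ≤ (s ^ 2 - ρ) / (4 * C * M) := by rw [hK₀def]; exact min_le_right _ _
    rw [le_div_iff₀ (by positivity : (0:ℝ) < 4 * C * M)] at h1
    linarith
  refine ⟨K₀ / 8, by linarith, ?_⟩
  intro δ hδ
  obtain ⟨G, hGdef⟩ : ∃ g : ℝ, g = ‖x‖ + 1 + K₀ * (‖x‖ + 1) / δ := ⟨_, rfl⟩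
  have hGx : ‖x‖ + 1 ≤ G := by
    rw [hGdef]
    have h0 : (0:ℝ) ≤ K₀ * (‖x‖ + 1) / δ :=
      div_nonneg (mul_nonneg hK₀0.le (by positivity)) hδ.le
    linarith
  have hG0 : (0:ℝ) < G := lt_of_lt_of_le (by positivity) hGx
  have hGδ : K₀ * (‖x‖ + 1) ≤ G * δ := by
    rw [hGdef]
    have h1 : (0:ℝ) < ‖x‖ + 1 := by positivity
    have h2 : (‖x‖ + 1 + K₀ * (‖x‖ + 1) / δ) * δ = (‖x‖ + 1) * δ + K₀ * (‖x‖ + 1) := by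
      field_simp
    rw [h2]
    have h3 : (0:ℝ) ≤ (‖x‖ + 1) * δ := by positivity
    linarith
  obtain ⟨τ, hτdef⟩ : ∃ c : ℝ, c = K₀ / (2 * G) := ⟨_, rfl⟩
  have hτ0 : (0:ℝ) < τ := by rw [hτdef]; exact div_pos hK₀0 (by linarith)
  have hGτ : 2 * G * τ = K₀ := by
    rw [hτdef]
    field_simp
  obtain ⟨C₇, hC₇def⟩ : ∃ c : ℝ, c = 4 * C * M * G ^ 2 / (s ^ 2 - ρ) := ⟨_, rfl⟩
  have hC₇0 : (0:ℝ) < C₇ := by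
    rw [hC₇def]
    exact div_pos (by positivity) hs2ρ
  have hC₇τ : C₇ * τ ≤ G / 2 := by
    rw [hC₇def, hτdef]
    rw [div_mul_div_comm, div_le_div_iff₀ (mul_pos hs2ρ (by linarith)) (by norm_num)]
    nlinarith [mul_le_mul_of_nonneg_left hK₀CM
      (by nlinarith [sq_nonneg G] : (0:ℝ) ≤ 2 * G ^ 2)]
  -- Step 7: the exit time N
  have hNex : ∃ n : ℕ, G * s ^ n ≤ ‖(A ^ n) x‖ := hx G
  set N := Nat.find hNex with hNdef
  have hNs : G * s ^ N ≤ ‖(A ^ N) x‖ := Nat.find_spec hNex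
  have hNlt : ∀ k, k < N → ‖(A ^ k) x‖ < G * s ^ k := by
    intro k hk
    have h := Nat.find_min hNex hk
    exact lt_of_not_ge h
  have hN1 : 1 ≤ N := by
    by_contra hcon
    have h0 : N = 0 := by omega
    rw [h0] at hNs
    simp only [pow_zero, mul_one, ContinuousLinearMap.one_apply] at hNs
    linarith
  obtain ⟨η, hηdef⟩ : ∃ c : ℝ, c = τ / s ^ N := ⟨_, rfl⟩
  have hη0 : (0:ℝ) < η := by rw [hηdef]; exact div_pos hτ0 (pow_pos hs0 N)
  have hηs : ∀ k, k ≤ N → η * s ^ k ≤ τ := by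
    intro k hk
    rw [hηdef, div_mul_eq_mul_div, div_le_iff₀ (pow_pos hs0 N)]
    have h1 : s ^ k ≤ s ^ N := pow_le_pow_right₀ h1s.le hk
    nlinarith [mul_le_mul_of_nonneg_left h1 hτ0.le]
  set w := φ + η • x with hwdef
  have hwφ2 : w - φ = η • x := by rw [hwdef]; exact add_sub_cancel_left φ _
  have hAw : ∀ k : ℕ, ‖(A ^ k) (w - φ)‖ = η * ‖(A ^ k) x‖ := by
    intro k
    rw [hwφ2, map_smul, norm_smul, Real.norm_eq_abs, abs_of_pos hη0]
  -- quadratic error vs linear bound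
  have hquad : ∀ k, k ≤ N → C₇ * η ^ 2 * (s ^ 2) ^ k ≤ G / 2 * (η * s ^ k) := by
    intro k hk
    have h1 : (s ^ 2) ^ k = (s ^ k) ^ 2 := by
      rw [← pow_mul, ← pow_mul, mul_comm]
    have h2 : η * s ^ k ≤ τ := hηs k hk
    have h3 : (0:ℝ) ≤ η * s ^ k := mul_nonneg hη0.le (pow_pos hs0 k).le
    have h4 : C₇ * η ^ 2 * (s ^ 2) ^ k = (C₇ * (η * s ^ k)) * (η * s ^ k) := by
      rw [h1]; ring
    rw [h4]
    have h5 : C₇ * (η * s ^ k) ≤ C₇ * τ := mul_le_mul_of_nonneg_left h2 hC₇0.le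
    exact mul_le_mul_of_nonneg_right (le_trans h5 hC₇τ) h3
  -- step bound: from the key estimate, orbit control
  have hstep : ∀ k, k < N → ‖W^[k] w - φ - (A ^ k) (w - φ)‖ ≤ C₇ * η ^ 2 * (s ^ 2) ^ k →
      ‖W^[k] w - φ‖ ≤ 2 * η * G * s ^ k := by
    intro k hk hkey
    have h2 : ‖(A ^ k) (w - φ)‖ ≤ η * (G * s ^ k) := by
      rw [hAw k]
      exact mul_le_mul_of_nonneg_left (hNlt k hk).le hη0.le
    have h3 : C₇ * η ^ 2 * (s ^ 2) ^ k ≤ G / 2 * (η * s ^ k) := hquad k hk.le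
    calc ‖W^[k] w - φ‖ = ‖(A ^ k) (w - φ) + (W^[k] w - φ - (A ^ k) (w - φ))‖ := by
          congr 1; abel
      _ ≤ ‖(A ^ k) (w - φ)‖ + ‖W^[k] w - φ - (A ^ k) (w - φ)‖ := norm_add_le _ _
      _ ≤ η * (G * s ^ k) + G / 2 * (η * s ^ k) := add_le_add h2 (le_trans hkey h3)
      _ ≤ 2 * η * G * s ^ k := by nlinarith [mul_pos (mul_pos hη0 hG0) (pow_pos hs0 k)]
  have hsmall : ∀ k, k ≤ N → 2 * η * G * s ^ k ≤ K₀ := by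
    intro k hk
    have h1 : η * s ^ k ≤ τ := hηs k hk
    nlinarith [mul_le_mul_of_nonneg_left h1 (by linarith : (0:ℝ) ≤ 2 * G)]
  -- Step 8: the key induction
  have key : ∀ n, n ≤ N → ‖W^[n] w - φ - (A ^ n) (w - φ)‖ ≤ C₇ * η ^ 2 * (s ^ 2) ^ n := by
    intro n
    induction n using Nat.strong_induction_on with
    | _ n ih =>
      intro hnN
      have horb : ∀ k, k < n → ‖W^[k] w - φ‖ ≤ 2 * η * G * s ^ k := by
        intro k hk
        exact hstep k (lt_of_lt_of_le hk hnN) (ih k hk (le_of_lt (lt_of_lt_of_le hk hnN)))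
      have hid := tele_aux A (fun k => W^[k] w - φ) n
      simp only [Function.iterate_zero, id_eq] at hid
      have hEq : W^[n] w - φ - (A ^ n) (w - φ) =
          ∑ k ∈ Finset.range n, (A ^ (n - 1 - k)) ((W^[k + 1] w - φ) - A (W^[k] w - φ)) := by
        rw [hid]; abel
      rw [hEq]
      calc ‖∑ k ∈ Finset.range n, (A ^ (n - 1 - k)) ((W^[k + 1] w - φ) - A (W^[k] w - φ))‖
          ≤ ∑ k ∈ Finset.range n, ‖(A ^ (n - 1 - k)) ((W^[k + 1] w - φ) - A (W^[k] w - φ))‖ :=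
            norm_sum_le _ _
        _ ≤ ∑ k ∈ Finset.range n, (M * ρ ^ (n - 1 - k)) * (C * (2 * η * G * s ^ k) ^ 2) := by
            apply Finset.sum_le_sum
            intro k hk
            rw [Finset.mem_range] at hk
            have hkN : k < N := lt_of_lt_of_le hk hnN
            have hok : ‖W^[k] w - φ‖ ≤ 2 * η * G * s ^ k := horb k hk
            have hoksm : ‖W^[k] w - φ‖ ≤ ε₀ :=
              le_trans hok (le_trans (hsmall k hkN.le) hK₀ε₀)
            have hit : W^[k + 1] w = W (φ + (W^[k] w - φ)) := by
              rw [Function.iterate_succ_apply']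
              congr 1
              abel
            have hd : ‖(W^[k + 1] w - φ) - A (W^[k] w - φ)‖ ≤ C * ‖W^[k] w - φ‖ ^ 2 := by
              rw [hit]
              exact htay _ hoksm
            have hd2 : ‖(W^[k + 1] w - φ) - A (W^[k] w - φ)‖ ≤ C * (2 * η * G * s ^ k) ^ 2 :=
              le_trans hd (mul_le_mul_of_nonneg_left
                (pow_le_pow_left₀ (norm_nonneg _) hok 2) hC0.le)
            calc ‖(A ^ (n - 1 - k)) ((W^[k + 1] w - φ) - A (W^[k] w - φ))‖
                ≤ ‖A ^ (n - 1 - k)‖ * ‖(W^[k + 1] w - φ) - A (W^[k] w - φ)‖ :=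
                  ContinuousLinearMap.le_opNorm _ _
              _ ≤ (M * ρ ^ (n - 1 - k)) * (C * (2 * η * G * s ^ k) ^ 2) :=
                  mul_le_mul (hMb _) hd2 (norm_nonneg _)
                    (mul_nonneg hM0.le (pow_pos hρ0 _).le)
        _ = (4 * C * M * G ^ 2 * η ^ 2) * ∑ k ∈ Finset.range n, (s ^ 2) ^ k * ρ ^ (n - 1 - k) := by
            rw [Finset.mul_sum]
            apply Finset.sum_congr rfl
            intro k _
            have h1 : (s ^ 2) ^ k = (s ^ k) ^ 2 := by rw [← pow_mul, ← pow_mul, mul_comm]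
            rw [h1]; ring
        _ ≤ (4 * C * M * G ^ 2 * η ^ 2) * ((s ^ 2) ^ n / (s ^ 2 - ρ)) := by
            apply mul_le_mul_of_nonneg_left ?_
              (mul_nonneg (mul_nonneg (mul_nonneg (mul_nonneg
                (by norm_num : (0:ℝ) ≤ 4) hC0.le) hM0.le) (sq_nonneg G)) (sq_nonneg η))
            rw [le_div_iff₀ hs2ρ]
            have hgeom := geom_sum₂_mul (s ^ 2) ρ n
            rw [hgeom]
            have : (0:ℝ) ≤ ρ ^ n := (pow_pos hρ0 n).le
            linarith
        _ = C₇ * η ^ 2 * (s ^ 2) ^ n := by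
            rw [hC₇def]
            field_simp
  -- Step 9: conclusion
  have hτN : η * s ^ N = τ := by
    rw [hηdef, div_mul_cancel₀]
    exact (pow_pos hs0 N).ne'
  have hlowN : K₀ / 4 ≤ ‖W^[N] w - φ‖ := by
    have h1 : η * (G * s ^ N) ≤ ‖(A ^ N) (w - φ)‖ := by
      rw [hAw N]
      exact mul_le_mul_of_nonneg_left hNs hη0.le
    have h2 := key N le_rfl
    have h3 := hquad N le_rfl
    have h4 : ‖(A ^ N) (w - φ)‖ - ‖W^[N] w - φ - (A ^ N) (w - φ)‖ ≤ ‖W^[N] w - φ‖ := by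
      have := norm_sub_norm_le ((A ^ N) (w - φ)) ((A ^ N) (w - φ) - (W^[N] w - φ))
      have he : (A ^ N) (w - φ) - ((A ^ N) (w - φ) - (W^[N] w - φ)) = W^[N] w - φ := by abel
      rw [he] at this
      have hn : ‖(A ^ N) (w - φ) - (W^[N] w - φ)‖ = ‖W^[N] w - φ - (A ^ N) (w - φ)‖ :=
        norm_sub_rev _ _
      linarith
    -- η * G * s^N = G * τ and G/2 * (η * s^N) = G/2 * τ ; G*τ - G/2*τ = G/2*τ = K₀/4
    have h5 : η * (G * s ^ N) = G * τ := by rw [← hτN]; ring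
    have h6 : G / 2 * (η * s ^ N) = G / 2 * τ := by rw [hτN]
    have h7 : G * τ - G / 2 * τ = K₀ / 4 := by linarith [hGτ]
    linarith
  have hmemO : ∀ k, k < N → W^[k] w ∈ O := by
    intro k hk
    have h1 := hstep k hk (key k hk.le)
    have h2 : ‖W^[k] w - φ‖ ≤ ε₀ := le_trans h1 (le_trans (hsmall k hk.le) hK₀ε₀)
    have h3 : W^[k] w ∈ Metric.closedBall φ ε₀ := by
      rw [Metric.mem_closedBall, dist_eq_norm]; exact h2
    exact (hball h3).2
  have hwO : w ∈ O := by
    have := hmemO 0 (by omega)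
    simpa using this
  have hwδ : ‖w - φ‖ < δ := by
    rw [hwφ2, norm_smul, Real.norm_eq_abs, abs_of_pos hη0]
    have h1 : η ≤ τ := by
      have := hηs 0 (Nat.zero_le N)
      simpa using this
    have h2 : η * ‖x‖ ≤ τ * ‖x‖ := mul_le_mul_of_nonneg_right h1 (norm_nonneg x)
    -- τ * ‖x‖ = K₀‖x‖/(2G) < δ  since  K₀(‖x‖+1) ≤ Gδ
    have h3 : τ * ‖x‖ * (2 * G) = K₀ * ‖x‖ := by
      rw [hτdef]; field_simp
    have h4 : K₀ * ‖x‖ < 2 * (G * δ) := by nlinarith [norm_nonneg x]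
    have h5 : τ * ‖x‖ < δ := by
      by_contra hcon
      push_neg at hcon
      have h6 : 2 * G * δ ≤ 2 * G * (τ * ‖x‖) :=
        mul_le_mul_of_nonneg_left hcon (by linarith)
      linarith
    linarith
  exact ⟨w, hwO, hwδ, N, hmemO, by linarith⟩
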